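/- Let p be a natural number, M > 0, C_b > 0, and let a : ℤ×ℤ → ℂ satisfy |a_{j,k}| ≤ M for all (j,k), and b : ℤ×ℤ → ℂ satisfy |b_{j,k}| ≤ C_b · (1 + max(|j|,|k|))^{-(p+4)} for all (j,k). Then there exists a constant C₁ > 0 such that for every positive integer F and all integers m, n with |m| ≤ F and |n| ≤ F, | Σ_{|j|≤F, |k|≤F, max(|m−j|,|n−k|)>F} a_{j,k} · b_{m−j, n−k} | ≤ C₁ · F^{-(p+2)}. -/

import Mathlib

/-- Truncated-convolution tail estimate: if `|a_{j,k}| ≤ M` and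
`|b_{j,k}| ≤ C_b (1 + max(|j|,|k|))^{-(p+4)}`, then there is `C₁ > 0` such that for
every positive integer `F` and all `|m| ≤ F`, `|n| ≤ F`,
`|∑_{|j|≤F, |k|≤F, max(|m−j|,|n−k|)>F} a_{j,k} b_{m−j,n−k}| ≤ C₁ F^{-(p+2)}`. -/
theorem stmt7 (p : ℕ) (M Cb : ℝ) (hM : 0 < M) (hCb : 0 < Cb)
    (a b : ℤ × ℤ → ℂ)
    (ha : ∀ jk : ℤ × ℤ, ‖a jk‖ ≤ M)
    (hb : ∀ jk : ℤ × ℤ,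
      ‖b jk‖ ≤ Cb / (1 + ((max |jk.1| |jk.2| : ℤ) : ℝ)) ^ (p + 4)) :
    ∃ C₁ > 0, ∀ F : ℕ, 0 < F → ∀ m n : ℤ, |m| ≤ (F : ℤ) → |n| ≤ (F : ℤ) →
      ‖∑ jk ∈ (Finset.Icc (-(F : ℤ)) (F : ℤ) ×ˢ Finset.Icc (-(F : ℤ)) (F : ℤ)).filter
            (fun jk => (F : ℤ) < max |m - jk.1| |n - jk.2|),
          a jk * b (m - jk.1, n - jk.2)‖
        ≤ C₁ / (F : ℝ) ^ (p + 2) := by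
  refine ⟨9 * M * Cb, by positivity, ?_⟩
  intro F hF m n hm hn
  set S := (Finset.Icc (-(F : ℤ)) (F : ℤ) ×ˢ Finset.Icc (-(F : ℤ)) (F : ℤ)).filter
      (fun jk => (F : ℤ) < max |m - jk.1| |n - jk.2|) with hSdef
  have hF1 : (1:ℝ) ≤ (F:ℝ) := by exact_mod_cast hF
  have hFpos : (0:ℝ) < (F:ℝ) := by linarith
  have hterm : ∀ jk ∈ S, ‖a jk * b (m - jk.1, n - jk.2)‖ ≤ M * (Cb / (F:ℝ) ^ (p + 4)) := by
    intro jk hjk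
    rw [norm_mul]
    have h1 : (F : ℤ) < max |m - jk.1| |n - jk.2| := (Finset.mem_filter.mp hjk).2
    have hb' := hb (m - jk.1, n - jk.2)
    have hle : (F:ℝ) ^ (p + 4) ≤ (1 + ((max |m - jk.1| |n - jk.2| : ℤ) : ℝ)) ^ (p + 4) := by
      apply pow_le_pow_left₀ hFpos.le
      have : (F:ℝ) < ((max |m - jk.1| |n - jk.2| : ℤ) : ℝ) := by exact_mod_cast h1
      linarith
    have hb'' : ‖b (m - jk.1, n - jk.2)‖ ≤ Cb / (F:ℝ) ^ (p + 4) := by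
      refine hb'.trans ?_
      gcongr
    exact mul_le_mul (ha jk) hb'' (norm_nonneg _) hM.le
  have hsum : ‖∑ jk ∈ S, a jk * b (m - jk.1, n - jk.2)‖
      ≤ (S.card : ℝ) * (M * (Cb / (F:ℝ) ^ (p + 4))) := by
    calc ‖∑ jk ∈ S, a jk * b (m - jk.1, n - jk.2)‖
        ≤ ∑ jk ∈ S, ‖a jk * b (m - jk.1, n - jk.2)‖ := norm_sum_le _ _
      _ ≤ ∑ _jk ∈ S, M * (Cb / (F:ℝ) ^ (p + 4)) := Finset.sum_le_sum hterm
      _ = (S.card : ℝ) * (M * (Cb / (F:ℝ) ^ (p + 4))) := by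
          rw [Finset.sum_const, nsmul_eq_mul]
  have hcard : (S.card : ℝ) ≤ 9 * (F:ℝ) ^ 2 := by
    have h1 : S.card ≤ (2 * F + 1) * (2 * F + 1) := by
      have := Finset.card_filter_le
        (Finset.Icc (-(F : ℤ)) (F : ℤ) ×ˢ Finset.Icc (-(F : ℤ)) (F : ℤ))
        (fun jk => (F : ℤ) < max |m - jk.1| |n - jk.2|)
      rw [Finset.card_product, Int.card_Icc] at this
      have hc : ((F : ℤ) + 1 - -(F : ℤ)).toNat = 2 * F + 1 := by omega
      rw [hc] at this
      exact this
    have h2 : (S.card : ℝ) ≤ ((2 * F + 1) * (2 * F + 1) : ℕ) := by exact_mod_cast h1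
    refine h2.trans ?_
    push_cast
    nlinarith
  calc ‖∑ jk ∈ S, a jk * b (m - jk.1, n - jk.2)‖
      ≤ (S.card : ℝ) * (M * (Cb / (F:ℝ) ^ (p + 4))) := hsum
    _ ≤ 9 * (F:ℝ) ^ 2 * (M * (Cb / (F:ℝ) ^ (p + 4))) := by
        apply mul_le_mul_of_nonneg_right hcard
        positivity
    _ = 9 * M * Cb / (F:ℝ) ^ (p + 2) := by
        have : (F:ℝ) ^ (p + 4) = (F:ℝ) ^ (p + 2) * (F:ℝ) ^ 2 := by ring
        rw [this]
        field_simp
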